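/- Let c be a random cluster drawn from the true clustering 𝒞 with probability proportional to positive weights p_c. Then the b-cubed precision satisfies P_{B³} = E[(1 − ROCE(c))/p_c] / E[1/p_c]. -/

import Mathlib

open Finset Filter Topology

/-- A clustering (partition) of a finite type of records, given by the block
containing each record. -/
structure Clustering (R : Type*) [Fintype R] [DecidableEq R] where
  blk : R → Finset R
  mem_blk : ∀ r, r ∈ blk r
  blk_eq : ∀ r r', r' ∈ blk r → blk r' = blk r

namespace Clustering

variable {R : Type*} [Fintype R] [DecidableEq R]

/-- The set of clusters (blocks) of the clustering. -/
def clusters (C : Clustering R) : Finset (Finset R) :=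
  Finset.univ.image C.blk

/-- The set of unordered pairs of distinct records lying in the same block. -/
def pairs (C : Clustering R) : Set (Sym2 R) :=
  {s | ¬ s.IsDiag ∧ ∀ a b : R, s = s(a, b) → a ∈ C.blk b}

/-- Expectation of `f (c)` when a random cluster `c` is drawn from `C.clusters`
with probability proportional to the positive weights `p`. -/
noncomputable def expect (C : Clustering R) (p : Finset R → ℝ) (f : Finset R → ℝ) : ℝ :=
  ∑ c ∈ C.clusters, (p c / ∑ c' ∈ C.clusters, p c') * f c

end Clustering

section Metrics

variable {R : Type*} [Fintype R] [DecidableEq R]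

/-- Record-wise underclustering error `UCE(r) = |c(r) \ ĉ(r)|`. -/
noncomputable def UCE (C Ch : Clustering R) (r : R) : ℝ := ((C.blk r) \ (Ch.blk r)).card

/-- Record-wise overclustering error `OCE(r) = |ĉ(r) \ c(r)|`. -/
noncomputable def OCE (C Ch : Clustering R) (r : R) : ℝ := ((Ch.blk r) \ (C.blk r)).card

/-- Record-wise size difference error `SDE(r) = |ĉ(r)| - |c(r)|`. -/
noncomputable def SDE (C Ch : Clustering R) (r : R) : ℝ :=
  ((Ch.blk r).card : ℝ) - ((C.blk r).card : ℝ)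

/-- Record-wise relative overclustering error. -/
noncomputable def ROCE (C Ch : Clustering R) (r : R) : ℝ := OCE C Ch r / ((Ch.blk r).card : ℝ)

/-- Record-wise relative underclustering error. -/
noncomputable def RUCE (C Ch : Clustering R) (r : R) : ℝ := UCE C Ch r / ((C.blk r).card : ℝ)

/-- Record-wise error indicator. -/
noncomputable def EI (C Ch : Clustering R) (r : R) : ℝ := if Ch.blk r = C.blk r then 0 else 1

/-- Cluster-wise average of a record-wise error metric:
`E(c) = (1/|c|) ∑_{r ∈ c} E(r)`. -/
noncomputable def clAvg (E : R → ℝ) (c : Finset R) : ℝ := (1 / (c.card : ℝ)) * ∑ r ∈ c, E r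

end Metrics


lemma one_sub_ROCE {R : Type*} [Fintype R] [DecidableEq R]
    (C Ch : Clustering R) (r : R) :
    1 - ROCE C Ch r = ((C.blk r ∩ Ch.blk r).card : ℝ) / ((Ch.blk r).card : ℝ) := by
  have hpos : 0 < (Ch.blk r).card := Finset.card_pos.mpr ⟨r, Ch.mem_blk r⟩
  have hne : ((Ch.blk r).card : ℝ) ≠ 0 := by positivity
  have hcard : ((Ch.blk r \ C.blk r).card : ℝ)
      = ((Ch.blk r).card : ℝ) - ((Ch.blk r ∩ C.blk r).card : ℝ) := by
    have := Finset.card_sdiff_add_card_inter (Ch.blk r) (C.blk r)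
    push_cast [← this]
    ring
  rw [ROCE, OCE, hcard, Finset.inter_comm]
  field_simp
  ring

/-- Lemma 4 (b-cubed precision part). -/
theorem bcubed_precision_representation
    {R : Type*} [Fintype R] [DecidableEq R]
    (C Ch : Clustering R) (p : Finset R → ℝ)
    (hp : ∀ c ∈ C.clusters, 0 < p c) :
    (1 / (C.clusters.card : ℝ)) *
        ∑ c ∈ C.clusters, (1 / (c.card : ℝ)) *
          ∑ r ∈ c, ((C.blk r ∩ Ch.blk r).card : ℝ) / ((Ch.blk r).card : ℝ) =
      C.expect p (fun c => (1 - clAvg (ROCE C Ch) c) / p c) /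
        C.expect p (fun c => 1 / p c) := by
  rcases Finset.eq_empty_or_nonempty C.clusters with hemp | hne
  · simp [hemp, Clustering.expect]
  have hcard : ∀ c ∈ C.clusters, (c.card : ℝ) ≠ 0 := by
    intro c hc
    obtain ⟨r, _, rfl⟩ := Finset.mem_image.mp hc
    have : 0 < (C.blk r).card := Finset.card_pos.mpr ⟨r, C.mem_blk r⟩
    positivity
  set S : ℝ := ∑ c' ∈ C.clusters, p c' with hS
  have hSpos : 0 < S := Finset.sum_pos hp hne
  have hSne : S ≠ 0 := ne_of_gt hSpos
  have key : ∀ c ∈ C.clusters,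
      1 - clAvg (ROCE C Ch) c = (1 / (c.card : ℝ)) *
        ∑ r ∈ c, ((C.blk r ∩ Ch.blk r).card : ℝ) / ((Ch.blk r).card : ℝ) := by
    intro c hc
    rw [clAvg]
    have h1 : (1 / (c.card : ℝ)) * (c.card : ℝ) = 1 := by
      rw [one_div, inv_mul_cancel₀ (hcard c hc)]
    calc 1 - (1 / (c.card : ℝ)) * ∑ r ∈ c, ROCE C Ch r
        = (1 / (c.card : ℝ)) * ∑ r ∈ c, (1 - ROCE C Ch r) := by
          rw [Finset.sum_sub_distrib, Finset.sum_const, nsmul_eq_mul, mul_one]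
          rw [mul_sub, h1]
      _ = _ := by
          congr 1
          exact Finset.sum_congr rfl fun r _ => one_sub_ROCE C Ch r
  have hE2 : C.expect p (fun c => 1 / p c) = (C.clusters.card : ℝ) / S := by
    rw [Clustering.expect, Finset.sum_congr rfl (fun c hc =>
      show p c / S * (1 / p c) = 1 / S by
        have := (hp c hc).ne'
        field_simp)]
    rw [Finset.sum_const, nsmul_eq_mul, mul_one_div]
  have hE1 : C.expect p (fun c => (1 - clAvg (ROCE C Ch) c) / p c)
      = (∑ c ∈ C.clusters, (1 - clAvg (ROCE C Ch) c)) / S := by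
    rw [Clustering.expect, Finset.sum_div]
    refine Finset.sum_congr rfl fun c hc =>
      show p c / S * ((1 - clAvg (ROCE C Ch) c) / p c)
          = (1 - clAvg (ROCE C Ch) c) / S from ?_
    have := (hp c hc).ne'
    field_simp
  have hn : ((C.clusters.card : ℕ) : ℝ) ≠ 0 := by
    exact_mod_cast (Finset.card_pos.mpr hne).ne'
  rw [hE1, hE2, Finset.sum_congr rfl key]
  rw [div_div_div_cancel_right₀ hSne]
  ring
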